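/- Define Δ(ε) = 1 − 4β²ε² − 4i(β/v)ε and let √Δ(ε) be its principal complex square root. Define the slow eigenvalue λ₁(ε) = (−1 − 2αε + √Δ(ε))/(2ε). Then, as ε → 0⁺, λ₁(ε) = −α − i(β/v) + β²·((1−v²)/v²)·ε + 2i(β³/v)·((1−v²)/v²)·ε² + O(ε³); that is, the function ε ↦ λ₁(ε) − (−α − i(β/v) + β²((1−v²)/v²)ε + 2i(β³/v)((1−v²)/v²)ε²) is O(ε³) as ε tends to 0 from the right. -/

import Mathlib

open Complex Filter Asymptotics
open Topology

set_option maxHeartbeats 2000000 in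
/-- Asymptotic expansion of the slow eigenvalue
`λ₁(ε) = (−1 − 2αε + √Δ(ε))/(2ε)` of the Fourier symbol of the
semi-discretized two-velocity relaxation system, as `ε → 0⁺`:
`λ₁(ε) = −α − i(β/v) + β²((1−v²)/v²)ε + 2i(β³/v)((1−v²)/v²)ε² + O(ε³)`. -/
theorem slow_eigenvalue_expansion (α β v : ℝ) (hv : v ≠ 0) :
    (fun ε : ℝ =>
        ((-1 - 2 * (α : ℂ) * (ε : ℂ)
            + (1 - 4 * (β : ℂ) ^ 2 * (ε : ℂ) ^ 2
                - 4 * Complex.I * ((β : ℂ) / (v : ℂ)) * (ε : ℂ)) ^ ((1 : ℂ) / 2))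
            / (2 * (ε : ℂ))
          - (-(α : ℂ) - Complex.I * ((β : ℂ) / (v : ℂ))
              + (β : ℂ) ^ 2 * ((1 - (v : ℂ) ^ 2) / (v : ℂ) ^ 2) * (ε : ℂ)
              + 2 * Complex.I * ((β : ℂ) ^ 3 / (v : ℂ)) * ((1 - (v : ℂ) ^ 2) / (v : ℂ) ^ 2)
                  * (ε : ℂ) ^ 2)))
      =O[nhdsWithin 0 (Set.Ioi 0)] (fun ε : ℝ => ε ^ 3) := by
  set l := nhdsWithin (0:ℝ) (Set.Ioi 0) with hl
  have hV : (v : ℂ) ≠ 0 := Complex.ofReal_ne_zero.mpr hv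
  set B := (β : ℂ)
  set V := (v : ℂ)
  set A := (α : ℂ)
  -- definitions
  set Δ : ℝ → ℂ := fun ε => 1 - 4 * B ^ 2 * (ε:ℂ) ^ 2 - 4 * Complex.I * (B / V) * (ε:ℂ) with hΔdef
  set Q : ℝ → ℂ := fun ε => 1 - 2 * Complex.I * (B / V) * (ε:ℂ)
      + 2 * B ^ 2 * ((1 - V^2)/V^2) * (ε:ℂ)^2
      + 4 * Complex.I * (B^3/V) * ((1 - V^2)/V^2) * (ε:ℂ)^3 with hQdef
  set s : ℝ → ℂ := fun ε => (Δ ε) ^ ((1 : ℂ)/2) with hsdef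
  set r : ℝ → ℂ := fun ε =>
      -(4 * B^4 * (1 - V^2) * (5 - V^2) / V^4
        + 16 * Complex.I * B^5 * (1 - V^2)^2 / V^5 * (ε:ℂ)
        - 16 * B^6 * (1 - V^2)^2 / V^6 * (ε:ℂ)^2) with hrdef
  -- polynomial identity : Δ - Q² = ε⁴ * r
  have key : ∀ ε : ℝ, Δ ε - (Q ε)^2 = (ε:ℂ)^4 * r ε := by
    intro ε
    simp only [hΔdef, hQdef, hrdef]
    have hI : Complex.I ^ 2 = -1 := Complex.I_sq
    field_simp
    ring_nf
    rw [Complex.I_sq]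
    ring
  -- Δ tends to 1
  have hΔcont : Continuous Δ := by fun_prop
  have hΔ1 : Tendsto Δ l (𝓝 1) := by
    have : Tendsto Δ (𝓝 0) (𝓝 (Δ 0)) := hΔcont.continuousAt
    simpa [hΔdef] using this.mono_left nhdsWithin_le_nhds
  have hΔne : ∀ᶠ ε in l, Δ ε ≠ 0 := hΔ1.eventually_ne one_ne_zero
  -- s tends to 1
  have hs1 : Tendsto s l (𝓝 1) := by
    have hc : ContinuousAt (fun z : ℂ => z ^ ((1:ℂ)/2)) 1 :=
      continuousAt_cpow_const (by norm_num [Complex.slitPlane])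
    have := hc.tendsto.comp hΔ1
    simpa [hsdef, Function.comp_def] using this
  -- Q tends to 1
  have hQ1 : Tendsto Q l (𝓝 1) := by
    have hc : Continuous Q := by fun_prop
    have : Tendsto Q (𝓝 0) (𝓝 (Q 0)) := hc.continuousAt
    simpa [hQdef] using this.mono_left nhdsWithin_le_nhds
  have hR : Tendsto (fun ε => s ε + Q ε) l (𝓝 2) := by
    have := hs1.add hQ1; norm_num at this; exact this
  have hRne : ∀ᶠ ε in l, s ε + Q ε ≠ 0 := hR.eventually_ne (by norm_num)
  have hRinv : Tendsto (fun ε => (s ε + Q ε)⁻¹) l (𝓝 2⁻¹) := hR.inv₀ (by norm_num)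
  have hg₂ : (fun ε => (s ε + Q ε)⁻¹) =O[l] (fun _ : ℝ => (1:ℝ)) := hRinv.isBigO_one ℝ
  -- g₁ bound
  have hrcont : Continuous r := by fun_prop
  have hr0 : Tendsto r l (𝓝 (r 0)) := hrcont.continuousAt.mono_left nhdsWithin_le_nhds
  have hr2 : (fun ε => r ε / 2) =O[l] (fun _ : ℝ => (1:ℝ)) :=
    (hr0.div_const 2).isBigO_one ℝ
  have hcube : (fun ε : ℝ => ((ε:ℂ))^3) =O[l] (fun ε : ℝ => ε^3) := by
    apply isBigO_of_le
    intro ε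
    simp [abs_pow]
  have heq : (fun ε : ℝ => (Δ ε - (Q ε)^2) / (2*(ε:ℂ)))
      =ᶠ[l] (fun ε : ℝ => (ε:ℂ)^3 * (r ε / 2)) := by
    filter_upwards [self_mem_nhdsWithin] with ε (hε : 0 < ε)
    have hε' : (ε:ℂ) ≠ 0 := by exact_mod_cast ne_of_gt hε
    rw [key]
    field_simp
  have h1 : (fun ε : ℝ => (ε:ℂ)^3 * (r ε / 2)) =O[l] (fun ε : ℝ => ε^3) := by
    simpa using hcube.mul hr2
  have hg₁ : (fun ε : ℝ => (Δ ε - (Q ε)^2) / (2*(ε:ℂ))) =O[l] (fun ε : ℝ => ε^3) :=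
    h1.congr' heq.symm EventuallyEq.rfl
  -- main eventual equality
  have hmain : (fun ε : ℝ =>
      ((-1 - 2 * A * (ε:ℂ) + s ε) / (2 * (ε:ℂ))
        - (-A - Complex.I * (B / V) + B ^ 2 * ((1 - V^2)/V^2) * (ε:ℂ)
            + 2 * Complex.I * (B^3/V) * ((1 - V^2)/V^2) * (ε:ℂ)^2)))
      =ᶠ[l] (fun ε : ℝ => ((Δ ε - (Q ε)^2) / (2*(ε:ℂ))) * (s ε + Q ε)⁻¹) := by
    filter_upwards [self_mem_nhdsWithin, hΔne, hRne] with ε (hε : 0 < ε) hΔ hRn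
    have hε' : (ε:ℂ) ≠ 0 := by exact_mod_cast ne_of_gt hε
    have hss : s ε * s ε = Δ ε := by
      rw [hsdef]
      rw [← Complex.cpow_add _ _ hΔ]
      norm_num
    have step1 : (-1 - 2 * A * (ε:ℂ) + s ε) / (2 * (ε:ℂ))
        - (-A - Complex.I * (B / V) + B ^ 2 * ((1 - V^2)/V^2) * (ε:ℂ)
            + 2 * Complex.I * (B^3/V) * ((1 - V^2)/V^2) * (ε:ℂ)^2)
        = (s ε - Q ε) / (2 * (ε:ℂ)) := by
      rw [hQdef]
      field_simp
      ring
    have step2 : s ε - Q ε = (Δ ε - (Q ε)^2) / (s ε + Q ε) := by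
      rw [eq_div_iff hRn]
      linear_combination hss
    rw [step1, step2]
    ring
  have hfin : (fun ε : ℝ => ((Δ ε - (Q ε)^2) / (2*(ε:ℂ))) * (s ε + Q ε)⁻¹)
      =O[l] (fun ε : ℝ => ε^3) := by
    simpa using hg₁.mul hg₂
  exact hfin.congr' hmain.symm EventuallyEq.rfl
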